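/- Let V and W be finite-dimensional 𝔽-vector spaces and let f, g : V → W be linear maps such that for every v ∈ V the vectors f(v) and g(v) are linearly dependent. Then one of the following holds: (a) there exist a linear map h : V → W and scalars a, b ∈ 𝔽 with f = a·h and g = b·h; or (b) there exists a vector w ∈ W such that the images of both f and g are contained in the line 𝔽·w. -/

import Mathlib

section Aux

variable {F V W : Type*} [Field F] [AddCommGroup V] [Module F V]
  [AddCommGroup W] [Module F W]

/-- From non-independence of a pair with nonzero second member, the first is a multiple. -/
lemma dep_of_not_indep {x y : W} (h : ¬ LinearIndependent F ![x, y]) (hy : y ≠ 0) :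
    ∃ a : F, x = a • y := by
  rw [linearIndependent_fin2] at h
  push_neg at h
  simp only [Matrix.cons_val_one, Matrix.head_cons, Matrix.cons_val_zero] at h
  rcases h hy with ⟨a, ha⟩
  exact ⟨a, ha.symm⟩

lemma dep_of_not_indep' {x y : W} (h : ¬ LinearIndependent F ![x, y]) (hx : x ≠ 0) :
    ∃ a : F, y = a • x := by
  by_cases hy : y = 0
  · exact ⟨0, by simp [hy]⟩
  · rcases dep_of_not_indep h hy with ⟨a, ha⟩
    have ha0 : a ≠ 0 := by rintro rfl; simp at ha; exact hx ha
    exact ⟨a⁻¹, by rw [ha, smul_smul, inv_mul_cancel₀ ha0, one_smul]⟩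

lemma key_eq {x y : W} (hind : LinearIndependent F ![x, y]) {p q r : F}
    (heq : p • x + q • y = r • x + r • y) : p = r ∧ q = r := by
  have h2 : (p - r) • x + (q - r) • y = 0 := by
    calc (p - r) • x + (q - r) • y = (p • x + q • y) - (r • x + r • y) := by module
      _ = 0 := sub_eq_zero.mpr heq
  have := (LinearIndependent.pair_iff.mp hind) _ _ h2
  constructor <;> [exact sub_eq_zero.mp this.1; exact sub_eq_zero.mp this.2]

/-- If `f v ∈ span (g v)` whenever `f v ≠ 0` fails... actually: if `g v` is a multiple of
`f v` whenever `f v ≠ 0`, and `f` has two independent values, then `g` is a multiple of `f`. -/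
lemma aux_rank_two (f g : V →ₗ[F] W)
    (hdep : ∀ v : V, f v ≠ 0 → ∃ c : F, g v = c • f v)
    (u1 u2 : V) (hind : LinearIndependent F ![f u1, f u2]) :
    ∃ c : F, g = c • f := by
  have h10 : f u1 ≠ 0 := by
    have := hind.ne_zero 0; simpa using this
  have h20 : f u2 ≠ 0 := by
    have := hind.ne_zero 1; simpa using this
  -- the key step: for independent values, the coefficients agree
  have key : ∀ a b : V, LinearIndependent F ![f a, f b] → ∀ p q : F,
      g a = p • f a → g b = q • f b → p = q := by
    intro a b hab p q hp hq
    have hfa0 : f a ≠ 0 := by have := hab.ne_zero 0; simpa using this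
    have hsum : f (a + b) ≠ 0 := by
      rw [map_add]
      intro h0
      have : (1 : F) • f a + (1 : F) • f b = 0 := by simpa using h0
      have := (LinearIndependent.pair_iff.mp hab) _ _ this
      exact one_ne_zero this.1
    rcases hdep (a + b) hsum with ⟨r, hr⟩
    rw [map_add, map_add, smul_add] at hr
    have : p • f a + q • f b = r • f a + r • f b := by rw [← hp, ← hq]; exact hr
    have := key_eq hab this
    rw [this.1, this.2]
  rcases hdep u1 h10 with ⟨c1, hc1⟩
  rcases hdep u2 h20 with ⟨c2, hc2⟩
  have hc12 : c1 = c2 := key u1 u2 hind c1 c2 hc1 hc2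
  refine ⟨c1, ?_⟩
  ext v
  rw [LinearMap.smul_apply]
  by_cases hfv : f v = 0
  · -- show g v = 0
    have hs1 : f (v + u1) ≠ 0 := by rw [map_add, hfv, zero_add]; exact h10
    have hs2 : f (v + u2) ≠ 0 := by rw [map_add, hfv, zero_add]; exact h20
    rcases hdep _ hs1 with ⟨r1, hr1⟩
    rcases hdep _ hs2 with ⟨r2, hr2⟩
    rw [map_add, map_add, hfv, zero_add, hc1] at hr1
    rw [map_add, map_add, hfv, zero_add, hc2] at hr2
    have e1 : g v = (r1 - c1) • f u1 := by rw [sub_smul, ← hr1]; abel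
    have e2 : g v = (r2 - c2) • f u2 := by rw [sub_smul, ← hr2]; abel
    have : (r1 - c1) • f u1 + (-(r2 - c2)) • f u2 = 0 := by
      rw [neg_smul, ← e1, ← e2]; abel
    have := (LinearIndependent.pair_iff.mp hind) _ _ this
    rw [e1, this.1, zero_smul, hfv, smul_zero]
  · rcases hdep v hfv with ⟨cv, hcv⟩
    by_cases hvi : LinearIndependent F ![f v, f u1]
    · rw [hcv, key v u1 hvi cv c1 hcv hc1]
    · rcases dep_of_not_indep' hvi hfv with ⟨a, ha⟩
      have ha0 : a ≠ 0 := by rintro rfl; simp at ha; exact h10 ha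
      -- f v = a⁻¹ • f u1, so f v and f u2 are independent
      have hfv' : f v = a⁻¹ • f u1 := by
        rw [ha, smul_smul, inv_mul_cancel₀ ha0, one_smul]
      have hvi2 : LinearIndependent F ![f v, f u2] := by
        rw [LinearIndependent.pair_iff]
        intro s t hst
        rw [hfv', smul_smul] at hst
        have := (LinearIndependent.pair_iff.mp hind) _ _ hst
        refine ⟨?_, this.2⟩
        have := this.1
        field_simp at this
        simpa using this
      have : cv = c2 := key v u2 hvi2 cv c2 hcv hc2
      rw [hcv, this, hc12]

end Aux

/-- If `f, g : V → W` are linear maps such that `f(v)` and `g(v)` are linearly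
dependent for every `v`, then either `f = a·h` and `g = b·h` for a common linear map `h` and
scalars `a, b`, or the images of `f` and `g` are both contained in a single line `𝔽·w`. -/
theorem stmt_12 (F : Type*) [Field F] [CharZero F] [IsAlgClosed F]
    (V W : Type*) [AddCommGroup V] [Module F V] [AddCommGroup W] [Module F W]
    [FiniteDimensional F V] [FiniteDimensional F W]
    (f g : V →ₗ[F] W)
    (h : ∀ v : V, ¬ LinearIndependent F ![f v, g v]) :
    (∃ (h' : V →ₗ[F] W) (a b : F), f = a • h' ∧ g = b • h') ∨
    (∃ w : W, (∀ v, f v ∈ Submodule.span F {w}) ∧ (∀ v, g v ∈ Submodule.span F {w})) := by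
  -- dependence in both directions
  have hdfg : ∀ v : V, f v ≠ 0 → ∃ c : F, g v = c • f v := fun v hv =>
    dep_of_not_indep' (h v) hv
  have hdgf : ∀ v : V, g v ≠ 0 → ∃ c : F, f v = c • g v := fun v hv =>
    dep_of_not_indep (h v) hv
  by_cases hf0 : f = 0
  · exact Or.inl ⟨g, 0, 1, by simp [hf0], by simp⟩
  by_cases hg0 : g = 0
  · exact Or.inl ⟨f, 1, 0, by simp, by simp [hg0]⟩
  by_cases hfr : ∃ u1 u2 : V, LinearIndependent F ![f u1, f u2]
  · rcases hfr with ⟨u1, u2, hind⟩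
    rcases aux_rank_two f g hdfg u1 u2 hind with ⟨c, hc⟩
    exact Or.inl ⟨f, 1, c, by simp, hc⟩
  by_cases hgr : ∃ u1 u2 : V, LinearIndependent F ![g u1, g u2]
  · rcases hgr with ⟨u1, u2, hind⟩
    rcases aux_rank_two g f hdgf u1 u2 hind with ⟨c, hc⟩
    exact Or.inl ⟨g, c, 1, hc, by simp⟩
  -- both f and g have rank ≤ 1
  push_neg at hfr hgr
  obtain ⟨u, hu⟩ : ∃ u : V, f u ≠ 0 := by
    by_contra hc
    push_neg at hc
    exact hf0 (LinearMap.ext fun v => hc v)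
  refine Or.inr ⟨f u, fun v => ?_, fun v => ?_⟩
  · rcases dep_of_not_indep (hfr v u) hu with ⟨a, ha⟩
    exact Submodule.mem_span_singleton.mpr ⟨a, ha.symm⟩
  · by_cases hfv : f v = 0
    · -- use v + u
      have hs : f (v + u) ≠ 0 := by rw [map_add, hfv, zero_add]; exact hu
      rcases hdfg _ hs with ⟨c, hc⟩
      rcases hdfg u hu with ⟨c', hc'⟩
      rw [map_add, map_add, hfv, zero_add, hc'] at hc
      have : g v = (c - c') • f u := by rw [sub_smul, ← hc]; abel
      exact Submodule.mem_span_singleton.mpr ⟨c - c', this.symm⟩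
    · rcases hdfg v hfv with ⟨c, hc⟩
      rcases dep_of_not_indep (hfr v u) hu with ⟨a, ha⟩
      refine Submodule.mem_span_singleton.mpr ⟨c * a, ?_⟩
      rw [hc, ha, smul_smul]
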